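/- Fix a constant c > 0 and define p(r,s) = (s + √(s² − r + c))/(c − r) on the domain {(r,s) : 0 ≤ r < c, s² − r + c > 0}. Then p satisfies p² − 2s·p_r − p_s = 0 and p·p_s + 2s·p_{rs} − 4·p_r + p_{ss} = 0. -/

import Mathlib

/-- partial derivative in the first variable `r` -/
noncomputable def pr (p : ℝ → ℝ → ℝ) (r s : ℝ) : ℝ := deriv (fun r' => p r' s) r
/-- partial derivative in the second variable `s` -/
noncomputable def ps (p : ℝ → ℝ → ℝ) (r s : ℝ) : ℝ := deriv (fun s' => p r s') s
/-- mixed second partial derivative `∂²p/∂r∂s` -/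
noncomputable def prs (p : ℝ → ℝ → ℝ) (r s : ℝ) : ℝ := deriv (fun r' => ps p r' s) r
/-- second partial derivative `∂²p/∂s²` -/
noncomputable def pss (p : ℝ → ℝ → ℝ) (r s : ℝ) : ℝ := deriv (fun s' => ps p r s') s

lemma husr (c r s : ℝ) : HasDerivAt (fun s' : ℝ => s' ^ 2 - r + c) (2 * s) s := by
  simpa using ((hasDerivAt_pow 2 s).sub_const r).add_const c

lemma hurr (c r s : ℝ) : HasDerivAt (fun r' : ℝ => s ^ 2 - r' + c) (-1) r := by
  simpa using ((hasDerivAt_id r).const_sub (s^2)).add_const c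

lemma hQs (c r s : ℝ) (h : 0 < s ^ 2 - r + c) :
    HasDerivAt (fun s' : ℝ => Real.sqrt (s' ^ 2 - r + c))
      (1 / (2 * Real.sqrt (s ^ 2 - r + c)) * (2 * s)) s :=
  (Real.hasDerivAt_sqrt h.ne').comp s (husr c r s)

lemma hQr (c r s : ℝ) (h : 0 < s ^ 2 - r + c) :
    HasDerivAt (fun r' : ℝ => Real.sqrt (s ^ 2 - r' + c))
      (1 / (2 * Real.sqrt (s ^ 2 - r + c)) * (-1)) r :=
  (Real.hasDerivAt_sqrt h.ne').comp r (hurr c r s)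

lemma hps (c r s : ℝ) (h : 0 < s ^ 2 - r + c) :
    HasDerivAt (fun s' : ℝ => (s' + Real.sqrt (s' ^ 2 - r + c)) / (c - r))
      ((1 + 1 / (2 * Real.sqrt (s ^ 2 - r + c)) * (2 * s)) / (c - r)) s :=
  ((hasDerivAt_id s).add (hQs c r s h)).div_const (c - r)

lemma hpr (c r s : ℝ) (h : 0 < s ^ 2 - r + c) (hr : r < c) :
    HasDerivAt (fun r' : ℝ => (s + Real.sqrt (s ^ 2 - r' + c)) / (c - r'))
      ((1 / (2 * Real.sqrt (s ^ 2 - r + c)) * (-1) * (c - r)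
        - (s + Real.sqrt (s ^ 2 - r + c)) * (-1)) / (c - r) ^ 2) r :=
  ((hQr c r s h).const_add s).div ((hasDerivAt_id r).const_sub c) (sub_ne_zero.2 hr.ne')

lemma hprs (c r s : ℝ) (h : 0 < s ^ 2 - r + c) (hr : r < c) :
    HasDerivAt (fun r' : ℝ => (1 + s * (Real.sqrt (s ^ 2 - r' + c))⁻¹) / (c - r'))
      ((s * (-(1 / (2 * Real.sqrt (s ^ 2 - r + c)) * (-1)) / (Real.sqrt (s ^ 2 - r + c)) ^ 2)
          * (c - r)
        - (1 + s * (Real.sqrt (s ^ 2 - r + c))⁻¹) * (-1)) / (c - r) ^ 2) r := by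
  have hQne : Real.sqrt (s ^ 2 - r + c) ≠ 0 := (Real.sqrt_pos.2 h).ne'
  exact ((((hQr c r s h).inv hQne).const_mul s).const_add 1).div
    ((hasDerivAt_id r).const_sub c) (sub_ne_zero.2 hr.ne')

lemma hpss (c r s : ℝ) (h : 0 < s ^ 2 - r + c) :
    HasDerivAt (fun s' : ℝ => (1 + s' * (Real.sqrt (s' ^ 2 - r + c))⁻¹) / (c - r))
      ((1 * (Real.sqrt (s ^ 2 - r + c))⁻¹
        + s * (-(1 / (2 * Real.sqrt (s ^ 2 - r + c)) * (2 * s)) / (Real.sqrt (s ^ 2 - r + c)) ^ 2))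
        / (c - r)) s := by
  have hQne : Real.sqrt (s ^ 2 - r + c) ≠ 0 := (Real.sqrt_pos.2 h).ne'
  exact (((hasDerivAt_id s).mul ((hQs c r s h).inv hQne)).const_add 1).div_const (c - r)

lemma ps_eq (c : ℝ) (p : ℝ → ℝ → ℝ)
    (hp : ∀ r s, p r s = (s + Real.sqrt (s ^ 2 - r + c)) / (c - r))
    (r s : ℝ) (h : 0 < s ^ 2 - r + c) :
    ps p r s = (1 + s * (Real.sqrt (s ^ 2 - r + c))⁻¹) / (c - r) := by
  have hQne : Real.sqrt (s ^ 2 - r + c) ≠ 0 := (Real.sqrt_pos.2 h).ne'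
  have h1 : (fun s' => p r s') = fun s' => (s' + Real.sqrt (s' ^ 2 - r + c)) / (c - r) :=
    funext fun s' => hp r s'
  have := (hps c r s h).deriv
  rw [ps, h1, this]
  congr 1
  field_simp

/-- `p(r,s) = (s + √(s² − r + c))/(c − r)` satisfies the two
zero-curvature equations on its natural domain. -/
theorem stmt_11 (c : ℝ) (hc : 0 < c) (p : ℝ → ℝ → ℝ)
    (hp : ∀ r s, p r s = (s + Real.sqrt (s ^ 2 - r + c)) / (c - r)) :
    ∀ r s : ℝ, 0 ≤ r → r < c → 0 < s ^ 2 - r + c →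
      (p r s) ^ 2 - 2 * s * pr p r s - ps p r s = 0 ∧
      p r s * ps p r s + 2 * s * prs p r s - 4 * pr p r s + pss p r s = 0 := by
  intro r s _ hr h
  set Q := Real.sqrt (s ^ 2 - r + c) with hQdef
  have hQpos : 0 < Q := Real.sqrt_pos.2 h
  have hQne : Q ≠ 0 := hQpos.ne'
  have hQ2 : Q ^ 2 = s ^ 2 - r + c := Real.sq_sqrt h.le
  have hA : (0:ℝ) < c - r := sub_pos.2 hr
  have hAne : c - r ≠ 0 := hA.ne'
  -- pr value
  have epr : pr p r s = (1 / (2 * Q) * (-1) * (c - r) - (s + Q) * (-1)) / (c - r) ^ 2 := by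
    have h1 : (fun r' => p r' s) = fun r' => (s + Real.sqrt (s ^ 2 - r' + c)) / (c - r') :=
      funext fun r' => hp r' s
    rw [pr, h1, (hpr c r s h hr).deriv]
  -- ps value
  have eps : ps p r s = (1 + s * Q⁻¹) / (c - r) := ps_eq c p hp r s h
  -- eventual equality of ps formula in r'
  have hcontr : ContinuousAt (fun r' : ℝ => s ^ 2 - r' + c) r := by fun_prop
  have hev1 : ∀ᶠ r' in nhds r, 0 < s ^ 2 - r' + c := hcontr.eventually (eventually_gt_nhds h)
  have hev : (fun r' => ps p r' s) =ᶠ[nhds r]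
      fun r' => (1 + s * (Real.sqrt (s ^ 2 - r' + c))⁻¹) / (c - r') :=
    hev1.mono fun r' h' => ps_eq c p hp r' s h'
  have eprs : prs p r s =
      (s * (-(1 / (2 * Q) * (-1)) / Q ^ 2) * (c - r) - (1 + s * Q⁻¹) * (-1)) / (c - r) ^ 2 := by
    rw [prs, hev.deriv_eq, (hprs c r s h hr).deriv]
  -- eventual equality of ps formula in s'
  have hconts : ContinuousAt (fun s' : ℝ => s' ^ 2 - r + c) s := by fun_prop
  have hev2 : ∀ᶠ s' in nhds s, 0 < s' ^ 2 - r + c := hconts.eventually (eventually_gt_nhds h)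
  have hevs : (fun s' => ps p r s') =ᶠ[nhds s]
      fun s' => (1 + s' * (Real.sqrt (s' ^ 2 - r + c))⁻¹) / (c - r) :=
    hev2.mono fun s' h' => ps_eq c p hp r s' h'
  have epss : pss p r s =
      (1 * Q⁻¹ + s * (-(1 / (2 * Q) * (2 * s)) / Q ^ 2)) / (c - r) := by
    rw [pss, hevs.deriv_eq, (hpss c r s h).deriv]
  rw [hp r s, epr, eps, eprs, epss, ← hQdef]
  constructor
  · field_simp
    linear_combination Q * hQ2
  · field_simp
    linear_combination (-6*Q^2) * hQ2
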